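/- Let G and H be connected graphs and let R ⊆ V(G □ H). If the projection π_G(R) is a general position set of G and |π_G(R)| = |R| (i.e., the projection to G is injective on R), then R is a general position set of G □ H. -/

import Mathlib

open SimpleGraph

/-- The interval `I_G[u,v]`: vertices lying on some shortest `u,v`-path. -/
def gpInterval {V : Type*} (G : SimpleGraph V) (u v : V) : Set V :=
  {x | ∃ p : G.Walk u v, p.length = G.dist u v ∧ x ∈ p.support}

/-- A general position set: no three (distinct) vertices of `S` lie on a common
shortest path. -/
def IsGPSet {V : Type*} (G : SimpleGraph V) (S : Set V) : Prop :=
  ∀ u ∈ S, ∀ v ∈ S, ∀ w ∈ S, u ≠ v → v ≠ w → u ≠ w → v ∉ gpInterval G u w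

/-- A maximal general position set. -/
def IsMaximalGPSet {V : Type*} (G : SimpleGraph V) (S : Set V) : Prop :=
  IsGPSet G S ∧ ∀ T : Set V, IsGPSet G T → S ⊆ T → T = S

/-- The general position number of a graph. -/
noncomputable def gpNumber {V : Type*} (G : SimpleGraph V) : ℕ :=
  sSup {n : ℕ | ∃ S : Finset V, IsGPSet G ↑S ∧ S.card = n}

/-- The lexicographic product of two simple graphs. -/
def lexProd {α β : Type*} (G : SimpleGraph α) (H : SimpleGraph β) :
    SimpleGraph (α × β) where
  Adj x y := G.Adj x.1 y.1 ∨ (x.1 = y.1 ∧ H.Adj x.2 y.2)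
  symm := by
    constructor
    intro x y h
    rcases h with h | ⟨h1, h2⟩
    · exact Or.inl h.symm
    · exact Or.inr ⟨h1.symm, h2.symm⟩
  loopless := by
    constructor
    intro x h
    rcases h with h | ⟨_, h2⟩
    · exact G.irrefl h
    · exact H.irrefl h2

lemma boxProd_proj {α β : Type*} {G : SimpleGraph α} {H : SimpleGraph β} :
    ∀ {x y : α × β} (p : (G □ H).Walk x y),
      ∃ (q : G.Walk x.1 y.1) (r : H.Walk x.2 y.2), q.length + r.length = p.length
  | _, _, .nil => ⟨.nil, .nil, rfl⟩
  | x, y, .cons h p => by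
    obtain ⟨q, r, hqr⟩ := boxProd_proj p
    rcases h with ⟨hG, h2⟩ | ⟨hH, h1⟩
    · exact ⟨.cons hG q, r.copy h2.symm rfl, by simp only [Walk.length_cons, Walk.length_copy]; show _ = p.length + 1; omega⟩
    · exact ⟨q.copy h1.symm rfl, .cons hH r, by simp only [Walk.length_cons, Walk.length_copy]; show _ = p.length + 1; omega⟩

lemma boxProd_dist {α β : Type*} {G : SimpleGraph α} {H : SimpleGraph β}
    (hG : G.Connected) (hH : H.Connected) (x y : α × β) :
    (G □ H).dist x y = G.dist x.1 y.1 + H.dist x.2 y.2 := by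
  apply le_antisymm
  · obtain ⟨q, hq⟩ := hG.exists_walk_length_eq_dist x.1 y.1
    obtain ⟨r, hr⟩ := hH.exists_walk_length_eq_dist x.2 y.2
    have hle := dist_le (((q.boxProdLeft H x.2).append (r.boxProdRight G y.1)).copy
      (Prod.ext rfl rfl) (Prod.ext rfl rfl))
    rw [Walk.length_copy, Walk.length_append] at hle
    rw [show (q.boxProdLeft H x.2).length = q.length from Walk.length_map .., show (r.boxProdRight G y.1).length = r.length from Walk.length_map .., hq, hr] at hle
    exact hle
  · obtain ⟨p, hp⟩ := (hG.boxProd hH).exists_walk_length_eq_dist x y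
    obtain ⟨q, r, hqr⟩ := boxProd_proj p
    rw [← hp, ← hqr]
    exact Nat.add_le_add (dist_le q) (dist_le r)

lemma mem_gpInterval_iff {V : Type*} {G : SimpleGraph V} (hG : G.Connected) {u v w : V} :
    v ∈ gpInterval G u w ↔ G.dist u v + G.dist v w = G.dist u w := by
  constructor
  · rintro ⟨p, hlen, hmem⟩
    obtain ⟨q, r, rfl⟩ := Walk.mem_support_iff_exists_append.mp hmem
    have h1 : G.dist u v ≤ q.length := dist_le q
    have h2 : G.dist v w ≤ r.length := dist_le r
    have h3 : G.dist u w ≤ G.dist u v + G.dist v w := hG.dist_triangle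
    rw [Walk.length_append] at hlen
    omega
  · intro h
    obtain ⟨q, hq⟩ := hG.exists_walk_length_eq_dist u v
    obtain ⟨r, hr⟩ := hG.exists_walk_length_eq_dist v w
    exact ⟨q.append r, by rw [Walk.length_append, hq, hr, h],
      (Walk.mem_support_append_iff _ _).mpr (Or.inl q.end_mem_support)⟩

/-- if the projection to `G` is injective on `R` and is a general
position set of `G`, then `R` is a general position set of `G □ H`. -/
theorem stmt9 {α β : Type*} (G : SimpleGraph α) (H : SimpleGraph β)
    (hG : G.Connected) (hH : H.Connected) (R : Set (α × β))
    (hproj : IsGPSet G (Prod.fst '' R)) (hinj : Set.InjOn Prod.fst R) :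
    IsGPSet (G □ H) R := by
  intro u hu v hv w hw huv hvw huw hmem
  have h := (mem_gpInterval_iff (hG.boxProd hH)).mp hmem
  rw [boxProd_dist hG hH, boxProd_dist hG hH, boxProd_dist hG hH] at h
  have hGt : G.dist u.1 w.1 ≤ G.dist u.1 v.1 + G.dist v.1 w.1 := hG.dist_triangle
  have hHt : H.dist u.2 w.2 ≤ H.dist u.2 v.2 + H.dist v.2 w.2 := hH.dist_triangle
  have hGeq : G.dist u.1 v.1 + G.dist v.1 w.1 = G.dist u.1 w.1 := by omega
  exact hproj u.1 ⟨u, hu, rfl⟩ v.1 ⟨v, hv, rfl⟩ w.1 ⟨w, hw, rfl⟩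
    (fun e => huv (hinj hu hv e)) (fun e => hvw (hinj hv hw e))
    (fun e => huw (hinj hu hw e)) ((mem_gpInterval_iff hG).mpr hGeq)
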